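/- Let k ≥ 1, let α be a finite type, and let f : α → α be a function such that the k-fold iterate f^[k] is the identity. If k does not divide the cardinality of α, then there exist x ∈ α and d ∈ ℕ with 0 < d, d < k, d ∣ k, and f^[d](x) = x. -/

import Mathlib

theorem stmt_4 (k : ℕ) (hk : 1 ≤ k) (α : Type) [Fintype α] (f : α → α)
    (hf : f^[k] = id) (h : ¬ k ∣ Fintype.card α) :
    ∃ (x : α) (d : ℕ), 0 < d ∧ d < k ∧ d ∣ k ∧ f^[d] x = x := by
  classical
  by_contra hcon
  push_neg at hcon
  apply h
  rcases eq_or_lt_of_le hk with h1 | h2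
  · exact h1 ▸ one_dvd _
  have hkpos : 0 < k := hk
  -- f is bijective
  have hinv1 : Function.LeftInverse f^[k-1] f := fun x => by
    rw [← Function.iterate_succ_apply, Nat.succ_eq_add_one, Nat.sub_add_cancel hk, hf]; rfl
  have hinv2 : Function.RightInverse f^[k-1] f := fun x => by
    rw [← Function.iterate_succ_apply' f (k-1) x]
    rw [Nat.succ_eq_add_one, Nat.sub_add_cancel hk, hf]; rfl
  have hbij : Function.Bijective f := ⟨hinv1.injective, hinv2.surjective⟩
  set g : Equiv.Perm α := Equiv.ofBijective f hbij with hg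
  have hgc : ∀ n : ℕ, ⇑(g ^ n) = f^[n] := by
    intro n
    rw [Equiv.Perm.coe_pow]
    rfl
  have hgk : g ^ k = 1 := by
    ext x
    rw [hgc k, hf]
    rfl
  -- every point has minimal period exactly k
  have hmin : ∀ x : α, Function.minimalPeriod f x = k := by
    intro x
    have hper : Function.IsPeriodicPt f k x := by
      simp [Function.IsPeriodicPt, Function.IsFixedPt, hf]
    have hd := hper.minimalPeriod_dvd
    have hpos := hper.minimalPeriod_pos hkpos
    rcases lt_or_eq_of_le (Nat.le_of_dvd hkpos hd) with hlt | heq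
    · exact absurd (Function.iterate_minimalPeriod (f := f) (x := x))
        (hcon x _ hpos hlt hd)
    · exact heq
  -- no fixed points, so support is everything
  have hsupp : g.support = Finset.univ := by
    ext x
    simp only [Equiv.Perm.mem_support, Finset.mem_univ, iff_true]
    intro hfix
    have hper1 : Function.IsPeriodicPt f 1 x := by
      exact hfix
    have := hper1.minimalPeriod_dvd
    rw [hmin x, Nat.dvd_one] at this
    omega
  -- every cycle length equals k
  have hct : ∀ n ∈ g.cycleType, n = k := by
    intro n hn
    have h1 : n ∣ k :=
      (Equiv.Perm.dvd_of_mem_cycleType hn).trans (orderOf_dvd_of_pow_eq_one hgk)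
    -- get a cycle c of support card n
    rw [Equiv.Perm.cycleType_def, Multiset.mem_map] at hn
    obtain ⟨c, hc, hcn⟩ := hn
    rw [Finset.mem_val] at hc
    have hcyc : c.IsCycle := (Equiv.Perm.mem_cycleFactorsFinset_iff.mp hc).1
    obtain ⟨y, hy⟩ : c.support.Nonempty := by
      rw [Finset.nonempty_iff_ne_empty]
      intro he
      exact hcyc.ne_one (by simpa [Equiv.Perm.support_eq_empty_iff] using he)
    have hceq : c = g.cycleOf y := Equiv.Perm.cycle_is_cycleOf hy hc
    have hord : orderOf c = n := by rw [hcyc.orderOf]; exact hcn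
    have hcy : (c ^ n) y = y := by rw [← hord, pow_orderOf_eq_one]; rfl
    have hgy : f^[n] y = y := by
      rw [← hgc n]
      have := Equiv.Perm.cycleOf_pow_apply_self g y n
      rw [← hceq] at this
      rw [← this, hcy]
    have hper : Function.IsPeriodicPt f n y := hgy
    have h2 : k ∣ n := by
      have := hper.minimalPeriod_dvd
      rwa [hmin y] at this
    exact Nat.dvd_antisymm h1 h2
  -- conclude
  have hcard : Fintype.card α = g.cycleType.sum := by
    rw [Equiv.Perm.sum_cycleType, hsupp, Finset.card_univ]
  rw [hcard]
  exact Multiset.dvd_sum fun x hx => (hct x hx) ▸ dvd_refl k
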